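/- Let Ξ be a metric space, π a Borel probability measure on Ξ, h : Ξ → ℝ measurable with finite essential supremum relative to π, Ψ : Ξ → [0,∞) π-integrable, and G ⊂ Ξ measurable. Suppose h*, η > 0 are such that G ⊂ {h ≤ h* − 2η} and π({h ≥ h* − η}) > 0. Then for every β > 0, the Gibbs measure π_β with density proportional to e^{h/β} with respect to π satisfies ∫_G Ψ dπ_β ≤ e^{−η/β} · (∫_Ξ Ψ dπ) / π({h ≥ h* − η}). -/

import Mathlib

open Set Filter Topology MeasureTheory

theorem stmt4 {Ξ : Type*} [MetricSpace Ξ] [MeasurableSpace Ξ] [BorelSpace Ξ]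
    (π : Measure Ξ) [IsProbabilityMeasure π]
    (h : Ξ → ℝ) (hmeas : Measurable h)
    (hess : ∃ C : ℝ, ∀ᵐ ζ ∂π, h ζ ≤ C)
    (Ψ : Ξ → ℝ) (hΨ0 : ∀ ζ, 0 ≤ Ψ ζ) (hΨint : Integrable Ψ π)
    (G : Set Ξ) (hG : MeasurableSet G)
    (hstar η : ℝ) (hη : 0 < η)
    (hGsub : G ⊆ {ζ | h ζ ≤ hstar - 2 * η})
    (hpos : 0 < π {ζ | hstar - η ≤ h ζ})
    (β : ℝ) (hβ : 0 < β) :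
    (∫ ζ in G, Ψ ζ * Real.exp (h ζ / β) ∂π) / (∫ ζ, Real.exp (h ζ / β) ∂π) ≤
      Real.exp (-η / β) * (∫ ζ, Ψ ζ ∂π) / (π {ζ | hstar - η ≤ h ζ}).toReal := by
  obtain ⟨C, hC⟩ := hess
  set A : Set Ξ := {ζ | hstar - η ≤ h ζ} with hAdef
  have hA : MeasurableSet A := measurableSet_le measurable_const hmeas
  have hp : 0 < (π A).toReal := ENNReal.toReal_pos hpos.ne' (measure_ne_top π A)
  have hexpmeas : Measurable fun ζ => Real.exp (h ζ / β) := (hmeas.div_const β).exp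
  have hexpint : Integrable (fun ζ => Real.exp (h ζ / β)) π := by
    refine Integrable.mono' (integrable_const (Real.exp (C / β)))
      hexpmeas.aestronglyMeasurable ?_
    filter_upwards [hC] with ζ hζ
    rw [Real.norm_eq_abs, abs_of_pos (Real.exp_pos _)]
    exact Real.exp_le_exp.2 (by gcongr)
  -- denominator lower bound
  have hDlow : Real.exp ((hstar - η) / β) * (π A).toReal ≤ ∫ ζ, Real.exp (h ζ / β) ∂π := by
    calc Real.exp ((hstar - η) / β) * (π A).toReal
        ≤ ∫ ζ in A, Real.exp (h ζ / β) ∂π := by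
          refine setIntegral_ge_of_const_le_real hA (measure_ne_top π A) ?_ hexpint.integrableOn
          intro ζ hζ
          exact Real.exp_le_exp.2 (by gcongr; exact hζ)
      _ ≤ ∫ ζ, Real.exp (h ζ / β) ∂π := by
          refine setIntegral_le_integral hexpint ?_
          filter_upwards with ζ using (Real.exp_pos _).le
  -- numerator integrability on G
  have hNint : IntegrableOn (fun ζ => Ψ ζ * Real.exp (h ζ / β)) G π := by
    refine Integrable.integrableOn ?_
    refine Integrable.mono' (hΨint.mul_const (Real.exp (C / β)))
      (hΨint.aestronglyMeasurable.mul hexpmeas.aestronglyMeasurable) ?_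
    filter_upwards [hC] with ζ hζ
    rw [Real.norm_eq_abs, abs_of_nonneg (mul_nonneg (hΨ0 ζ) (Real.exp_pos _).le)]
    exact mul_le_mul_of_nonneg_left (Real.exp_le_exp.2 (by gcongr)) (hΨ0 ζ)
  have hI0 : 0 ≤ ∫ ζ, Ψ ζ ∂π := integral_nonneg hΨ0
  -- numerator upper bound
  have hNup : (∫ ζ in G, Ψ ζ * Real.exp (h ζ / β) ∂π)
      ≤ Real.exp ((hstar - 2 * η) / β) * ∫ ζ, Ψ ζ ∂π := by
    calc (∫ ζ in G, Ψ ζ * Real.exp (h ζ / β) ∂π)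
        ≤ ∫ ζ in G, Ψ ζ * Real.exp ((hstar - 2 * η) / β) ∂π := by
          refine setIntegral_mono_on hNint
            ((hΨint.mul_const _).integrableOn) hG ?_
          intro ζ hζ
          exact mul_le_mul_of_nonneg_left
            (Real.exp_le_exp.2 (by gcongr; exact hGsub hζ)) (hΨ0 ζ)
      _ = (∫ ζ in G, Ψ ζ ∂π) * Real.exp ((hstar - 2 * η) / β) := by
          rw [integral_mul_const]
      _ ≤ (∫ ζ, Ψ ζ ∂π) * Real.exp ((hstar - 2 * η) / β) := by
          refine mul_le_mul_of_nonneg_right (setIntegral_le_integral hΨint ?_)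
            (Real.exp_pos _).le
          filter_upwards with ζ using hΨ0 ζ
      _ = Real.exp ((hstar - 2 * η) / β) * ∫ ζ, Ψ ζ ∂π := by ring
  have key : (∫ ζ in G, Ψ ζ * Real.exp (h ζ / β) ∂π) / (∫ ζ, Real.exp (h ζ / β) ∂π)
      ≤ (Real.exp ((hstar - 2 * η) / β) * ∫ ζ, Ψ ζ ∂π)
        / (Real.exp ((hstar - η) / β) * (π A).toReal) := by
    refine div_le_div₀ (by positivity) hNup (by positivity) hDlow
  refine key.trans_eq ?_
  have hc2 : Real.exp ((hstar - η) / β) ≠ 0 := (Real.exp_pos _).ne'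
  have hsplit : Real.exp ((hstar - 2 * η) / β)
      = Real.exp (-η / β) * Real.exp ((hstar - η) / β) := by
    rw [← Real.exp_add]
    congr 1
    field_simp
    ring
  rw [hsplit]
  field_simp
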